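/- arXiv:0710.4109 — 3 statements merged into one kernel-verified Lean document; each statement's English description precedes it below -/
import Mathlib

section
/- There is a constant c > 0 such that for every integer n ≥ 3 there exists a set S of n points in the plane ℝ² in strictly convex position (every point of S is an extreme point of the convex hull of S) such that the number of unordered triples of distinct points of S forming a triangle of area exactly 1 is at least c · n · log n. -/
open scoped Classical

/-- The plane `ℝ²`. -/
noncomputable abbrev Plane := EuclideanSpace ℝ (Fin 2)

/-- Area of the triangle with vertices `a b c` in the plane:
`(1/2)·|det(b − a, c − a)|`. -/
noncomputable def triArea2 (a b c : Plane) : ℝ :=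
  |(b 0 - a 0) * (c 1 - a 1) - (b 1 - a 1) * (c 0 - a 0)| / 2

/-- The number of unordered triples of distinct points of `S` that span a
triangle of area exactly `A`. -/
noncomputable def areaTripleCount2 (S : Finset Plane) (A : ℝ) : ℕ :=
  Set.ncard {T : Finset Plane | T ⊆ S ∧ T.card = 3 ∧
    ∃ a b c : Plane, T = {a, b, c} ∧ triArea2 a b c = A}

/-- A finite point set is in strictly convex position if every point of it is
an extreme point of its convex hull. -/
def StrictlyConvexPosition (S : Finset Plane) : Prop :=
  ∀ p ∈ S, p ∈ Set.extremePoints ℝ (convexHull ℝ (S : Set Plane))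

set_option maxHeartbeats 1000000

noncomputable def pt (x : ℝ) : Plane := WithLp.toLp 2 ![x, x⁻¹]

example (x : ℝ) : pt x 0 = x := by simp [pt]
example (x : ℝ) : pt x 1 = x⁻¹ := by simp [pt]

lemma pt_inj : Function.Injective pt := by
  intro a b h
  have := congrArg (fun w : Plane => w 0) h
  simpa [pt] using this

@[simp] lemma pt_zero (x : ℝ) : pt x 0 = x := by simp [pt]


lemma area_pt {x y z : ℝ} (hx : 0 < x) (hxy : x < y) (hyz : y < z)
    (h : (y - x) * (z - y) * (z - x) = 2 * (x * y * z)) :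
    triArea2 (pt x) (pt y) (pt z) = 1 := by
  have hy : 0 < y := hx.trans hxy
  have hz : 0 < z := hy.trans hyz
  have hdet : (pt y 0 - pt x 0) * (pt z 1 - pt x 1) -
      (pt y 1 - pt x 1) * (pt z 0 - pt x 0) = 2 := by
    simp only [pt, PiLp.toLp_apply, Matrix.cons_val_zero, Matrix.cons_val_one, Matrix.head_cons]
    field_simp
    linear_combination h
  unfold triArea2
  rw [hdet]
  norm_num



lemma convex_pos (Y : Finset ℝ) (hY : ∀ y ∈ Y, 0 < y) :
    StrictlyConvexPosition (Y.image pt) := by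
  intro p hp
  rw [Finset.mem_image] at hp
  obtain ⟨a, haY, rfl⟩ := hp
  have ha : 0 < a := hY a haY
  set ℓ : Plane → ℝ := fun w => w 1 + w 0 / a ^ 2 with hℓ
  have hlin : ∀ (s t : ℝ) (u v : Plane), ℓ (s • u + t • v) = s * ℓ u + t * ℓ v := by
    intro s t u v
    simp only [hℓ, PiLp.add_apply, PiLp.smul_apply, smul_eq_mul]
    ring
  set A : Set Plane := {w | 2 / a ≤ ℓ w ∧ (ℓ w = 2 / a → w = pt a)} with hA
  have hSA : (↑(Y.image pt) : Set Plane) ⊆ A := by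
    rintro w hw
    rw [Finset.coe_image, Set.mem_image] at hw
    obtain ⟨q, hqY, rfl⟩ := hw
    have hq : 0 < q := hY q (by exact_mod_cast hqY)
    have key : ℓ (pt q) - 2 / a = (q - a) ^ 2 / (a ^ 2 * q) := by
      simp only [hℓ, pt, PiLp.toLp_apply, Matrix.cons_val_zero, Matrix.cons_val_one, Matrix.head_cons]
      field_simp
      ring
    have hpos : (0:ℝ) ≤ (q - a) ^ 2 / (a ^ 2 * q) := by positivity
    constructor
    · linarith [key, hpos]
    · intro heq
      have hz : (q - a) ^ 2 / (a ^ 2 * q) = 0 := by rw [← key, heq]; ring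
      field_simp at hz
      have : q = a := by nlinarith
      rw [this]
  have hAconv : Convex ℝ A := by
    rintro u ⟨hu1, hu2⟩ v ⟨hv1, hv2⟩ s t hs ht hst
    have e : s * (2/a) + t * (2/a) = 2/a := by rw [← add_mul, hst, one_mul]
    have h1' : s * (2/a) ≤ s * ℓ u := mul_le_mul_of_nonneg_left hu1 hs
    have h2' : t * (2/a) ≤ t * ℓ v := mul_le_mul_of_nonneg_left hv1 ht
    constructor
    · rw [hlin]; linarith
    · intro heq
      rw [hlin] at heq
      have hu0 : s * (ℓ u - 2 / a) + t * (ℓ v - 2 / a) = 0 := by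
        have : s * (2/a) + t * (2/a) = 2/a := by rw [← add_mul, hst, one_mul]
        nlinarith
      have hsu : s * (ℓ u - 2 / a) = 0 ∧ t * (ℓ v - 2 / a) = 0 := by
        constructor <;> nlinarith [mul_nonneg hs (by linarith : (0:ℝ) ≤ ℓ u - 2/a),
          mul_nonneg ht (by linarith : (0:ℝ) ≤ ℓ v - 2/a)]
      rcases eq_or_lt_of_le hs with hs0 | hs0
      · have hts : t = 1 := by linarith
        have : v = pt a := hv2 (by nlinarith [hsu.2])
        rw [← hs0, hts, this, zero_smul, one_smul, zero_add]
      · have hu' : u = pt a := hu2 (by nlinarith [hsu.1])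
        rcases eq_or_lt_of_le ht with ht0 | ht0
        · have hss : s = 1 := by linarith
          rw [← ht0, hss, hu', zero_smul, one_smul, add_zero]
        · have hv' : v = pt a := hv2 (by nlinarith [hsu.2])
          rw [hu', hv', ← add_smul, hst, one_smul]
  have hhull : convexHull ℝ (↑(Y.image pt) : Set Plane) ⊆ A := convexHull_min hSA hAconv
  have hpa : ℓ (pt a) = 2 / a := by
    simp only [hℓ, pt, PiLp.toLp_apply, Matrix.cons_val_zero, Matrix.cons_val_one, Matrix.head_cons]
    field_simp
    ring
  refine ⟨subset_convexHull ℝ _ ?_, ?_⟩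
  · exact_mod_cast Finset.mem_image_of_mem pt haY
  · rintro x₁ hx₁ x₂ hx₂ ⟨s, t, hs, ht, hst, heq⟩
    obtain ⟨h1ge, h1eq⟩ := hhull hx₁
    obtain ⟨h2ge, h2eq⟩ := hhull hx₂
    have hsum : s * ℓ x₁ + t * ℓ x₂ = 2 / a := by rw [← hlin, heq, hpa]
    have e : s * (2/a) + t * (2/a) = 2/a := by rw [← add_mul, hst, one_mul]
    have h1' : s * (2/a) ≤ s * ℓ x₁ := mul_le_mul_of_nonneg_left h1ge hs.le
    have h2' : t * (2/a) ≤ t * ℓ x₂ := mul_le_mul_of_nonneg_left h2ge ht.le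
    have e1 : ℓ x₁ = 2 / a := by
      by_contra hne
      have hlt : 2/a < ℓ x₁ := lt_of_le_of_ne h1ge (Ne.symm hne)
      have : s * (2/a) < s * ℓ x₁ := mul_lt_mul_of_pos_left hlt hs
      linarith
    have e2 : ℓ x₂ = 2 / a := by
      by_contra hne
      have hlt : 2/a < ℓ x₂ := lt_of_le_of_ne h2ge (Ne.symm hne)
      have : t * (2/a) < t * ℓ x₂ := mul_lt_mul_of_pos_left hlt ht
      linarith
    exact h1eq e1



lemma quad_finite (a b c : ℝ) (h : a ≠ 0 ∨ b ≠ 0) :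
    {x : ℝ | a * x ^ 2 + b * x + c = 0}.Finite := by
  by_contra hinf
  have hinf' : {x : ℝ | a * x ^ 2 + b * x + c = 0}.Infinite := hinf
  obtain ⟨t, hts, htc⟩ := hinf'.exists_subset_card_eq 3
  obtain ⟨x, y, z, hxy, hxz, hyz, rfl⟩ := Finset.card_eq_three.mp htc
  have hx : a * x ^ 2 + b * x + c = 0 := hts (by simp)
  have hy : a * y ^ 2 + b * y + c = 0 := hts (by simp)
  have hz : a * z ^ 2 + b * z + c = 0 := hts (by simp)
  have e1 : a * (x + y) + b = 0 := by
    have h1 : (x - y) * (a * (x + y) + b) = 0 := by ring_nf; nlinarith [hx, hy]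
    rcases mul_eq_zero.mp h1 with h | h
    · exact absurd (by linarith : x = y) hxy
    · exact h
  have e2 : a * (y + z) + b = 0 := by
    have h1 : (y - z) * (a * (y + z) + b) = 0 := by ring_nf; nlinarith [hy, hz]
    rcases mul_eq_zero.mp h1 with h | h
    · exact absurd (by linarith : y = z) hyz
    · exact h
  have ha : a = 0 := by
    have h1 : a * (x - z) = 0 := by linarith
    rcases mul_eq_zero.mp h1 with h | h
    · exact h
    · exact absurd (by linarith : x = z) hxz
  have hb : b = 0 := by rw [ha] at e1; linarith
  tauto

noncomputable def Qf (q : ℝ) : ℝ :=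
  ((q ^ 2 + 2 * q - 1) + Real.sqrt ((q ^ 2 + 2 * q - 1) ^ 2 - 4 * (q - 1) * (q ^ 2 - q))) /
    (2 * (q - 1))

lemma Qf_props {q : ℝ} (h1 : 1 < q) (h2 : q < 2) :
    q < Qf q ∧ (q - 1) * (Qf q) ^ 2 - (q ^ 2 + 2 * q - 1) * Qf q + (q ^ 2 - q) = 0 := by
  have hq1 : (0:ℝ) < q - 1 := by linarith
  set B : ℝ := q ^ 2 + 2 * q - 1 with hB
  set D : ℝ := B ^ 2 - 4 * (q - 1) * (q ^ 2 - q) with hD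
  have hDpos : 0 < D := by
    rw [hD, hB]; nlinarith [sq_nonneg q, sq_nonneg (q-1), sq_nonneg (q-2)]
  have hs : Real.sqrt D ^ 2 = D := Real.sq_sqrt hDpos.le
  have hsnn : 0 ≤ Real.sqrt D := Real.sqrt_nonneg D
  have hQ : Qf q = (B + Real.sqrt D) / (2 * (q - 1)) := rfl
  constructor
  · rw [hQ]
    rw [lt_div_iff₀ (by linarith : (0:ℝ) < 2 * (q - 1))]
    have : q ^ 2 - 4 * q + 1 < 0 := by nlinarith
    nlinarith [hsnn]
  · rw [hQ]
    field_simp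
    nlinarith [hs]

lemma choose_q (R : Finset ℝ) :
    ∃ q : ℝ, 1 < q ∧ q < 2 ∧ ∀ C ∈ R, q ≠ C ∧ Qf q ≠ C ∧ Qf q ≠ C * q := by
  classical
  set Bad : Set ℝ := ⋃ C ∈ R, ({C} ∪ {x : ℝ | (1 - C) * x ^ 2 + (C ^ 2 - 2 * C - 1) * x + (C - C ^ 2) = 0}
      ∪ {x : ℝ | (C ^ 2 - C) * x ^ 2 + (1 - 2 * C - C ^ 2) * x + (C - 1) = 0}) with hBad
  have hBadFin : Bad.Finite := by
    apply Set.Finite.biUnion R.finite_toSet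
    intro C _
    apply Set.Finite.union
    apply Set.Finite.union
    · exact Set.finite_singleton C
    · apply quad_finite
      rcases eq_or_ne C 1 with rfl | hC
      · right; norm_num
      · left; intro h; apply hC; linarith [h]
    · apply quad_finite
      rcases eq_or_ne C 1 with rfl | hC1
      · right; norm_num
      rcases eq_or_ne C 0 with rfl | hC0
      · right; norm_num
      · left
        intro h
        have : C * (C - 1) = 0 := by ring_nf; linarith [h]
        rcases mul_eq_zero.mp this with h' | h'
        · exact hC0 h'
        · exact hC1 (by linarith)
  have hIoo : (Set.Ioo (1:ℝ) 2).Infinite := Set.Ioo_infinite (by norm_num)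
  obtain ⟨q, hq⟩ := (hIoo.diff hBadFin).nonempty
  obtain ⟨⟨hq1, hq2⟩, hqBad⟩ := hq
  obtain ⟨hlt, hΦ⟩ := Qf_props hq1 hq2
  refine ⟨q, hq1, hq2, fun C hC => ⟨?_, ?_, ?_⟩⟩
  · rintro rfl
    exact hqBad (Set.mem_biUnion hC (by left; left; rfl))
  · intro hQC
    apply hqBad
    apply Set.mem_biUnion hC
    left; right
    show (1 - C) * q ^ 2 + (C ^ 2 - 2 * C - 1) * q + (C - C ^ 2) = 0
    rw [hQC] at hΦ
    linear_combination hΦ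
  · intro hQC
    apply hqBad
    apply Set.mem_biUnion hC
    right
    show (C ^ 2 - C) * q ^ 2 + (1 - 2 * C - C ^ 2) * q + (C - 1) = 0
    rw [hQC] at hΦ
    have hq0 : q ≠ 0 := by linarith
    have : q * ((C ^ 2 - C) * q ^ 2 + (1 - 2 * C - C ^ 2) * q + (C - 1)) = 0 := by
      linear_combination hΦ
    rcases mul_eq_zero.mp this with h | h
    · exact absurd h hq0
    · exact h



lemma triple_eq {a b c a' b' c' : ℝ} (h : ({a, b, c} : Finset ℝ) = {a', b', c'})
    (o1 : a < b) (o2 : b < c) (o1' : a' < b') (o2' : b' < c') :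
    a = a' ∧ b = b' ∧ c = c' := by
  have ma : a = a' ∨ a = b' ∨ a = c' := by
    have : a ∈ ({a', b', c'} : Finset ℝ) := h ▸ (by simp)
    simpa using this
  have ma' : a' = a ∨ a' = b ∨ a' = c := by
    have : a' ∈ ({a, b, c} : Finset ℝ) := h ▸ (by simp)
    simpa using this
  have mc : c = a' ∨ c = b' ∨ c = c' := by
    have : c ∈ ({a', b', c'} : Finset ℝ) := h ▸ (by simp)
    simpa using this
  have mc' : c' = a ∨ c' = b ∨ c' = c := by
    have : c' ∈ ({a, b, c} : Finset ℝ) := h ▸ (by simp)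
    simpa using this
  have ea : a = a' := by
    rcases ma with h1 | h1 | h1 <;> rcases ma' with h2 | h2 | h2 <;> linarith
  have ec : c = c' := by
    rcases mc with h1 | h1 | h1 <;> rcases mc' with h2 | h2 | h2 <;> linarith
  have mb : b = a' ∨ b = b' ∨ b = c' := by
    have : b ∈ ({a', b', c'} : Finset ℝ) := h ▸ (by simp)
    simpa using this
  have eb : b = b' := by rcases mb with h1 | h1 | h1 <;> linarith
  exact ⟨ea, eb, ec⟩

lemma triple_eq_pt {a b c a' b' c' : ℝ}
    (h : ({pt a, pt b, pt c} : Finset Plane) = {pt a', pt b', pt c'})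
    (o1 : a < b) (o2 : b < c) (o1' : a' < b') (o2' : b' < c') :
    a = a' ∧ b = b' ∧ c = c' := by
  have himg : ({a, b, c} : Finset ℝ).image pt = ({a', b', c'} : Finset ℝ).image pt := by
    simpa [Finset.image_insert, Finset.image_singleton] using h
  exact triple_eq (Finset.image_injective pt_inj himg) o1 o2 o1' o2'



noncomputable def mapT (lam : ℝ) (T : Finset Plane) : Finset Plane :=
  T.image (fun w => pt (lam * w 0))

lemma EX : ∀ L : ℕ, ∃ (X : Finset ℝ) (F : Finset (Finset Plane)),
    (∀ x ∈ X, 1 ≤ x) ∧ X.card = 3 ^ L ∧ F.card = L * 3 ^ (L - 1) ∧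
    ∀ T ∈ F, ∃ x y z : ℝ, x ∈ X ∧ y ∈ X ∧ z ∈ X ∧ x < y ∧ y < z ∧
      T = {pt x, pt y, pt z} ∧ (y - x) * (z - y) * (z - x) = 2 * (x * y * z) := by
  intro L
  induction L with
  | zero =>
    refine ⟨{1}, ∅, by norm_num, by norm_num, by norm_num, by simp⟩
  | succ M IH =>
    obtain ⟨X, F, hXpos, hXcard, hFcard, hFmem⟩ := IH
    set R : Finset ℝ := (X ×ˢ X).image (fun p => p.1 / p.2) with hR
    obtain ⟨q, hq1, hq2, hqR⟩ := choose_q R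
    set Q : ℝ := Qf q with hQdef
    obtain ⟨hqQ, hquad⟩ := Qf_props hq1 hq2
    have hQ1 : 1 < Q := hq1.trans hqQ
    have hq0 : (0:ℝ) < q := by linarith
    have hQ0 : (0:ℝ) < Q := by linarith
    have harea : (q - 1) * (Q - q) * (Q - 1) = 2 * (q * Q) := by linear_combination hquad
    -- the three non-coincidence conditions
    have hno : ∀ x ∈ X, ∀ y ∈ X, q * x ≠ y ∧ Q * x ≠ y ∧ Q * x ≠ q * y := by
      intro x hx y hy
      have hx0 : (0:ℝ) < x := lt_of_lt_of_le one_pos (hXpos x hx)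
      have hy0 : (0:ℝ) < y := lt_of_lt_of_le one_pos (hXpos y hy)
      have hCR : y / x ∈ R := by
        rw [hR]
        have hp : ((y, x) : ℝ × ℝ) ∈ X ×ˢ X := Finset.mem_product.mpr ⟨hy, hx⟩
        exact Finset.mem_image_of_mem (fun p : ℝ × ℝ => p.1 / p.2) hp
      obtain ⟨c1, c2, c3⟩ := hqR (y / x) hCR
      refine ⟨?_, ?_, ?_⟩
      · intro h; apply c1; rw [eq_div_iff hx0.ne']; exact h
      · intro h; apply c2; rw [eq_div_iff hx0.ne']; exact h
      · intro h; apply c3; rw [div_mul_eq_mul_div, eq_div_iff hx0.ne']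
        linear_combination h
    set X1 : Finset ℝ := X.image (fun x => q * x) with hX1
    set X2 : Finset ℝ := X.image (fun x => Q * x) with hX2
    set X' : Finset ℝ := X ∪ X1 ∪ X2 with hX'
    have hmemX1 : ∀ y, y ∈ X1 ↔ ∃ x ∈ X, q * x = y := by
      intro y; rw [hX1, Finset.mem_image]
    have hmemX2 : ∀ y, y ∈ X2 ↔ ∃ x ∈ X, Q * x = y := by
      intro y; rw [hX2, Finset.mem_image]
    have dXX1 : Disjoint X X1 := by
      rw [Finset.disjoint_right]
      intro y hy1 hyX
      obtain ⟨x, hx, hxy⟩ := (hmemX1 y).mp hy1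
      exact (hno x hx y hyX).1 hxy
    have dXX2 : Disjoint X X2 := by
      rw [Finset.disjoint_right]
      intro y hy2 hyX
      obtain ⟨x, hx, hxy⟩ := (hmemX2 y).mp hy2
      exact (hno x hx y hyX).2.1 hxy
    have dX1X2 : Disjoint X1 X2 := by
      rw [Finset.disjoint_left]
      intro y hy1 hy2
      obtain ⟨x, hx, hxy⟩ := (hmemX1 y).mp hy1
      obtain ⟨x', hx', hxy'⟩ := (hmemX2 y).mp hy2
      exact (hno x' hx' x hx).2.2 (by rw [hxy', hxy])
    have hX1card : X1.card = X.card :=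
      Finset.card_image_of_injective X (mul_right_injective₀ hq0.ne')
    have hX2card : X2.card = X.card :=
      Finset.card_image_of_injective X (mul_right_injective₀ hQ0.ne')
    have hX'card : X'.card = 3 ^ (M + 1) := by
      rw [hX', Finset.card_union_of_disjoint, Finset.card_union_of_disjoint dXX1]
      · rw [hX1card, hX2card, hXcard]; ring
      · rw [Finset.disjoint_union_left]; exact ⟨dXX2, dX1X2⟩
    have hX'pos : ∀ x ∈ X', 1 ≤ x := by
      intro x hx
      rw [hX', Finset.mem_union, Finset.mem_union] at hx
      rcases hx with (hx | hx) | hx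
      · exact hXpos x hx
      · obtain ⟨x0, hx0, rfl⟩ := (hmemX1 x).mp hx
        nlinarith [hXpos x0 hx0]
      · obtain ⟨x0, hx0, rfl⟩ := (hmemX2 x).mp hx
        nlinarith [hXpos x0 hx0]
    -- triangle families
    set Fq : Finset (Finset Plane) := F.image (mapT q) with hFq
    set FQ : Finset (Finset Plane) := F.image (mapT Q) with hFQ
    set New : Finset (Finset Plane) :=
      X.image (fun x => ({pt x, pt (q * x), pt (Q * x)} : Finset Plane)) with hNew
    -- computation of scaled triangles
    have hmapT : ∀ (lam x y z : ℝ),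
        mapT lam ({pt x, pt y, pt z} : Finset Plane) = {pt (lam * x), pt (lam * y), pt (lam * z)} := by
      intro lam x y z
      simp [mapT, Finset.image_insert, Finset.image_singleton]
    -- witness spec for scaled families
    have hscale : ∀ (lam : ℝ), 0 < lam → ∀ T ∈ F, ∃ x y z : ℝ,
        (∃ x0 ∈ X, lam * x0 = x) ∧ (∃ y0 ∈ X, lam * y0 = y) ∧ (∃ z0 ∈ X, lam * z0 = z) ∧
        x < y ∧ y < z ∧ mapT lam T = {pt x, pt y, pt z} ∧
        (y - x) * (z - y) * (z - x) = 2 * (x * y * z) := by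
      intro lam hlam T hT
      obtain ⟨x, y, z, hx, hy, hz, hxy, hyz, hTeq, hid⟩ := hFmem T hT
      refine ⟨lam * x, lam * y, lam * z, ⟨x, hx, rfl⟩, ⟨y, hy, rfl⟩, ⟨z, hz, rfl⟩,
        by nlinarith, by nlinarith, by rw [hTeq, hmapT], by linear_combination lam ^ 3 * hid⟩
    set F' : Finset (Finset Plane) := F ∪ Fq ∪ FQ ∪ New with hF'
    have hinc0 : X ⊆ X' := by
      intro a ha; rw [hX']; exact Finset.mem_union.mpr (Or.inl (Finset.mem_union.mpr (Or.inl ha)))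
    have hinc1 : X1 ⊆ X' := by
      intro a ha; rw [hX']; exact Finset.mem_union.mpr (Or.inl (Finset.mem_union.mpr (Or.inr ha)))
    have hinc2 : X2 ⊆ X' := by
      intro a ha; rw [hX']; exact Finset.mem_union.mpr (Or.inr ha)
    have hposX : ∀ x ∈ X, (0:ℝ) < x := fun x hx => lt_of_lt_of_le one_pos (hXpos x hx)
    -- orders for the new triangles
    have hordNew : ∀ x ∈ X, x < q * x ∧ q * x < Q * x := by
      intro x hx
      have := hposX x hx
      constructor <;> nlinarith
    -- witness form for Fq/FQ members
    have hFqmem : ∀ T ∈ Fq, ∃ x2 y2 z2 : ℝ, x2 ∈ X ∧ y2 ∈ X ∧ z2 ∈ X ∧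
        x2 < y2 ∧ y2 < z2 ∧ T = {pt (q * x2), pt (q * y2), pt (q * z2)} := by
      intro T hT
      rw [hFq, Finset.mem_image] at hT
      obtain ⟨T0, hT0, rfl⟩ := hT
      obtain ⟨x, y, z, hx, hy, hz, o1, o2, hTeq, _⟩ := hFmem T0 hT0
      exact ⟨x, y, z, hx, hy, hz, o1, o2, by rw [hTeq, hmapT]⟩
    have hFQmem : ∀ T ∈ FQ, ∃ x2 y2 z2 : ℝ, x2 ∈ X ∧ y2 ∈ X ∧ z2 ∈ X ∧
        x2 < y2 ∧ y2 < z2 ∧ T = {pt (Q * x2), pt (Q * y2), pt (Q * z2)} := by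
      intro T hT
      rw [hFQ, Finset.mem_image] at hT
      obtain ⟨T0, hT0, rfl⟩ := hT
      obtain ⟨x, y, z, hx, hy, hz, o1, o2, hTeq, _⟩ := hFmem T0 hT0
      exact ⟨x, y, z, hx, hy, hz, o1, o2, by rw [hTeq, hmapT]⟩
    have hNewmem : ∀ T ∈ New, ∃ x : ℝ, x ∈ X ∧ T = {pt x, pt (q * x), pt (Q * x)} := by
      intro T hT
      rw [hNew, Finset.mem_image] at hT
      obtain ⟨x, hx, rfl⟩ := hT
      exact ⟨x, hx, rfl⟩
    -- orders scaled
    have hordq : ∀ lam : ℝ, 0 < lam → ∀ u v : ℝ, u < v → lam * u < lam * v := by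
      intro lam hlam u v huv; nlinarith
    -- disjointness of the four families
    have dFFq : Disjoint F Fq := by
      rw [Finset.disjoint_left]
      intro T hTF hTq
      obtain ⟨x1, y1, z1, hx1, hy1, hz1, o11, o12, e1, _⟩ := hFmem T hTF
      obtain ⟨x2, y2, z2, hx2, hy2, hz2, o21, o22, e2⟩ := hFqmem T hTq
      rw [e1] at e2
      obtain ⟨ex, _, _⟩ := triple_eq_pt e2 o11 o12 (hordq q hq0 _ _ o21) (hordq q hq0 _ _ o22)
      exact (hno x2 hx2 x1 hx1).1 ex.symm
    have dFFQ : Disjoint F FQ := by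
      rw [Finset.disjoint_left]
      intro T hTF hTq
      obtain ⟨x1, y1, z1, hx1, hy1, hz1, o11, o12, e1, _⟩ := hFmem T hTF
      obtain ⟨x2, y2, z2, hx2, hy2, hz2, o21, o22, e2⟩ := hFQmem T hTq
      rw [e1] at e2
      obtain ⟨ex, _, _⟩ := triple_eq_pt e2 o11 o12 (hordq Q hQ0 _ _ o21) (hordq Q hQ0 _ _ o22)
      exact (hno x2 hx2 x1 hx1).2.1 ex.symm
    have dFNew : Disjoint F New := by
      rw [Finset.disjoint_left]
      intro T hTF hTn
      obtain ⟨x1, y1, z1, hx1, hy1, hz1, o11, o12, e1, _⟩ := hFmem T hTF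
      obtain ⟨x, hx, e2⟩ := hNewmem T hTn
      rw [e1] at e2
      obtain ⟨_, ey, _⟩ := triple_eq_pt e2 o11 o12 (hordNew x hx).1 (hordNew x hx).2
      exact (hno x hx y1 hy1).1 ey.symm
    have dFqFQ : Disjoint Fq FQ := by
      rw [Finset.disjoint_left]
      intro T hTq hTQ
      obtain ⟨x1, y1, z1, hx1, hy1, hz1, o11, o12, e1⟩ := hFqmem T hTq
      obtain ⟨x2, y2, z2, hx2, hy2, hz2, o21, o22, e2⟩ := hFQmem T hTQ
      rw [e1] at e2
      obtain ⟨ex, _, _⟩ := triple_eq_pt e2 (hordq q hq0 _ _ o11) (hordq q hq0 _ _ o12)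
        (hordq Q hQ0 _ _ o21) (hordq Q hQ0 _ _ o22)
      exact (hno x2 hx2 x1 hx1).2.2 ex.symm
    have dFqNew : Disjoint Fq New := by
      rw [Finset.disjoint_left]
      intro T hTq hTn
      obtain ⟨x1, y1, z1, hx1, hy1, hz1, o11, o12, e1⟩ := hFqmem T hTq
      obtain ⟨x, hx, e2⟩ := hNewmem T hTn
      rw [e1] at e2
      obtain ⟨ex, _, _⟩ := triple_eq_pt e2 (hordq q hq0 _ _ o11) (hordq q hq0 _ _ o12)
        (hordNew x hx).1 (hordNew x hx).2
      exact (hno x1 hx1 x hx).1 ex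
    have dFQNew : Disjoint FQ New := by
      rw [Finset.disjoint_left]
      intro T hTQ hTn
      obtain ⟨x1, y1, z1, hx1, hy1, hz1, o11, o12, e1⟩ := hFQmem T hTQ
      obtain ⟨x, hx, e2⟩ := hNewmem T hTn
      rw [e1] at e2
      obtain ⟨ex, _, _⟩ := triple_eq_pt e2 (hordq Q hQ0 _ _ o11) (hordq Q hQ0 _ _ o12)
        (hordNew x hx).1 (hordNew x hx).2
      exact (hno x1 hx1 x hx).2.1 ex
    refine ⟨X', F', hX'pos, hX'card, ?_, ?_⟩
    · -- cardinality of F'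
      have cFq : Fq.card = F.card := by
        rw [hFq]
        apply Finset.card_image_of_injOn
        intro T1 hT1 T2 hT2 heq
        obtain ⟨x1, y1, z1, hx1, hy1, hz1, o11, o12, e1, _⟩ := hFmem T1 hT1
        obtain ⟨x2, y2, z2, hx2, hy2, hz2, o21, o22, e2, _⟩ := hFmem T2 hT2
        rw [e1, e2, hmapT, hmapT] at heq
        obtain ⟨ex, ey, ez⟩ := triple_eq_pt heq (hordq q hq0 _ _ o11) (hordq q hq0 _ _ o12)
          (hordq q hq0 _ _ o21) (hordq q hq0 _ _ o22)
        have ex' : x1 = x2 := mul_left_cancel₀ hq0.ne' ex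
        have ey' : y1 = y2 := mul_left_cancel₀ hq0.ne' ey
        have ez' : z1 = z2 := mul_left_cancel₀ hq0.ne' ez
        rw [e1, e2, ex', ey', ez']
      have cFQ : FQ.card = F.card := by
        rw [hFQ]
        apply Finset.card_image_of_injOn
        intro T1 hT1 T2 hT2 heq
        obtain ⟨x1, y1, z1, hx1, hy1, hz1, o11, o12, e1, _⟩ := hFmem T1 hT1
        obtain ⟨x2, y2, z2, hx2, hy2, hz2, o21, o22, e2, _⟩ := hFmem T2 hT2
        rw [e1, e2, hmapT, hmapT] at heq
        obtain ⟨ex, ey, ez⟩ := triple_eq_pt heq (hordq Q hQ0 _ _ o11) (hordq Q hQ0 _ _ o12)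
          (hordq Q hQ0 _ _ o21) (hordq Q hQ0 _ _ o22)
        have ex' : x1 = x2 := mul_left_cancel₀ hQ0.ne' ex
        have ey' : y1 = y2 := mul_left_cancel₀ hQ0.ne' ey
        have ez' : z1 = z2 := mul_left_cancel₀ hQ0.ne' ez
        rw [e1, e2, ex', ey', ez']
      have cNew : New.card = X.card := by
        rw [hNew]
        apply Finset.card_image_of_injOn
        intro x1 hx1 x2 hx2 heq
        obtain ⟨ex, _, _⟩ := triple_eq_pt heq (hordNew x1 hx1).1 (hordNew x1 hx1).2
          (hordNew x2 hx2).1 (hordNew x2 hx2).2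
        exact ex
      rw [hF', Finset.card_union_of_disjoint, Finset.card_union_of_disjoint,
        Finset.card_union_of_disjoint dFFq, cFq, cFQ, cNew, hFcard, hXcard]
      · cases M with
        | zero => norm_num
        | succ K =>
          simp only [Nat.succ_sub_one]
          ring
      · rw [Finset.disjoint_union_left]; exact ⟨dFFQ, dFqFQ⟩
      · rw [Finset.disjoint_union_left, Finset.disjoint_union_left]
        exact ⟨⟨dFNew, dFqNew⟩, dFQNew⟩
    · -- membership invariant
      intro T hT
      rw [hF', Finset.mem_union, Finset.mem_union, Finset.mem_union] at hT
      rcases hT with ((hT | hT) | hT) | hT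
      · obtain ⟨x, y, z, hx, hy, hz, o1, o2, e, hid⟩ := hFmem T hT
        exact ⟨x, y, z, hinc0 hx, hinc0 hy, hinc0 hz, o1, o2, e, hid⟩
      · rw [hFq, Finset.mem_image] at hT
        obtain ⟨T0, hT0, rfl⟩ := hT
        obtain ⟨x, y, z, ⟨x0, hx0, hex⟩, ⟨y0, hy0, hey⟩, ⟨z0, hz0, hez⟩, o1, o2, e, hid⟩ :=
          hscale q hq0 T0 hT0
        refine ⟨x, y, z, ?_, ?_, ?_, o1, o2, e, hid⟩
        · exact hinc1 ((hmemX1 x).mpr ⟨x0, hx0, hex⟩)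
        · exact hinc1 ((hmemX1 y).mpr ⟨y0, hy0, hey⟩)
        · exact hinc1 ((hmemX1 z).mpr ⟨z0, hz0, hez⟩)
      · rw [hFQ, Finset.mem_image] at hT
        obtain ⟨T0, hT0, rfl⟩ := hT
        obtain ⟨x, y, z, ⟨x0, hx0, hex⟩, ⟨y0, hy0, hey⟩, ⟨z0, hz0, hez⟩, o1, o2, e, hid⟩ :=
          hscale Q hQ0 T0 hT0
        refine ⟨x, y, z, ?_, ?_, ?_, o1, o2, e, hid⟩
        · exact hinc2 ((hmemX2 x).mpr ⟨x0, hx0, hex⟩)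
        · exact hinc2 ((hmemX2 y).mpr ⟨y0, hy0, hey⟩)
        · exact hinc2 ((hmemX2 z).mpr ⟨z0, hz0, hez⟩)
      · obtain ⟨x, hx, e⟩ := hNewmem T hT
        have hx0 := hposX x hx
        refine ⟨x, q * x, Q * x, hinc0 hx, hinc1 ((hmemX1 _).mpr ⟨x, hx, rfl⟩),
          hinc2 ((hmemX2 _).mpr ⟨x, hx, rfl⟩), (hordNew x hx).1, (hordNew x hx).2, e, ?_⟩
        linear_combination x ^ 3 * harea



/-- For every `n ≥ 3` there are `n` points in strictly convex position in the
plane spanning `Ω(n log n)` unit-area triangles. -/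
theorem convex_position_unit_area_lower_bound :
    ∃ c : ℝ, 0 < c ∧ ∀ n : ℕ, 3 ≤ n →
      ∃ S : Finset Plane, S.card = n ∧ StrictlyConvexPosition S ∧
        c * (n : ℝ) * Real.log n ≤ (areaTripleCount2 S 1 : ℝ) := by
  refine ⟨1/50, by norm_num, ?_⟩
  intro n hn
  set L : ℕ := Nat.log 3 n with hL
  have hL1 : 1 ≤ L := Nat.log_pos (by norm_num) (by omega)
  have h3L : 3 ^ L ≤ n := Nat.pow_log_le_self 3 (by omega)
  have hn3 : n < 3 ^ (L + 1) := Nat.lt_pow_succ_log_self (by norm_num) n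
  obtain ⟨X, F, hXpos, hXcard, hFcard, hFmem⟩ := EX L
  set m : ℕ := n - 3 ^ L with hm
  set fill : Finset ℝ := (Finset.range m).image (fun k : ℕ => ((k : ℝ) + 2)⁻¹) with hfill
  have hfillmem : ∀ y ∈ fill, 0 < y ∧ y < 1 := by
    intro y hy
    rw [hfill, Finset.mem_image] at hy
    obtain ⟨k, _, rfl⟩ := hy
    have hk2 : (1:ℝ) < (k : ℝ) + 2 := by
      have : (0:ℝ) ≤ (k : ℝ) := Nat.cast_nonneg k
      linarith
    constructor
    · show (0:ℝ) < ((k : ℝ) + 2)⁻¹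
      positivity
    · show ((k : ℝ) + 2)⁻¹ < 1
      rw [inv_lt_one_iff₀]
      right
      exact hk2
  have hfillcard : fill.card = m := by
    have hinj : Function.Injective (fun k : ℕ => ((k : ℝ) + 2)⁻¹) := by
      intro a b hab
      simp only at hab
      have h2 : ((a : ℝ) + 2) ≠ 0 := by positivity
      have h3 : ((b : ℝ) + 2) ≠ 0 := by positivity
      field_simp at hab
      exact_mod_cast (by linarith : (a:ℝ) = b)
    rw [hfill, Finset.card_image_of_injective _ hinj, Finset.card_range]
  set Y : Finset ℝ := X ∪ fill with hY
  have hYpos : ∀ y ∈ Y, 0 < y := by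
    intro y hy
    rw [hY, Finset.mem_union] at hy
    rcases hy with hy | hy
    · linarith [hXpos y hy]
    · exact (hfillmem y hy).1
  have hdisj : Disjoint X fill := by
    rw [Finset.disjoint_left]
    intro a haX hafill
    linarith [hXpos a haX, (hfillmem a hafill).2]
  have hYcard : Y.card = n := by
    rw [hY, Finset.card_union_of_disjoint hdisj, hXcard, hfillcard, hm]
    omega
  set S : Finset Plane := Y.image pt with hS
  have hScard : S.card = n := by
    rw [hS, Finset.card_image_of_injective _ pt_inj, hYcard]
  refine ⟨S, hScard, convex_pos Y hYpos, ?_⟩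
  -- counting
  have hsub : (↑F : Set (Finset Plane)) ⊆ {T : Finset Plane | T ⊆ S ∧ T.card = 3 ∧
      ∃ a b c : Plane, T = {a, b, c} ∧ triArea2 a b c = 1} := by
    intro T hT
    obtain ⟨x, y, z, hx, hy, hz, o1, o2, e, hid⟩ := hFmem T hT
    have hx0 : (0:ℝ) < x := lt_of_lt_of_le one_pos (hXpos x hx)
    have hptmem : ∀ u : ℝ, u ∈ X → pt u ∈ S := by
      intro u hu
      rw [hS]
      exact Finset.mem_image_of_mem pt (by rw [hY, Finset.mem_union]; exact Or.inl hu)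
    refine ⟨?_, ?_, pt x, pt y, pt z, e, area_pt hx0 o1 o2 hid⟩
    · rw [e]
      refine Finset.insert_subset (hptmem x hx) (Finset.insert_subset (hptmem y hy) ?_)
      simpa using hptmem z hz
    · rw [e]
      refine Finset.card_eq_three.mpr ⟨pt x, pt y, pt z, ?_, ?_, ?_, rfl⟩
      · intro hxy; exact absurd (pt_inj hxy) (by linarith)
      · intro hxz; exact absurd (pt_inj hxz) (by linarith)
      · intro hyz; exact absurd (pt_inj hyz) (by linarith)
  have hfin : {T : Finset Plane | T ⊆ S ∧ T.card = 3 ∧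
      ∃ a b c : Plane, T = {a, b, c} ∧ triArea2 a b c = 1}.Finite := by
    apply Set.Finite.subset (S.powerset.finite_toSet)
    intro T hT
    simpa [Finset.mem_powerset] using hT.1
  have hcount : (L * 3 ^ (L - 1) : ℕ) ≤ areaTripleCount2 S 1 := by
    have h1 : (↑F : Set (Finset Plane)).ncard ≤ areaTripleCount2 S 1 :=
      Set.ncard_le_ncard hsub hfin
    rwa [Set.ncard_coe_finset, hFcard] at h1
  -- arithmetic
  obtain ⟨K, hK⟩ : ∃ K, L = K + 1 := ⟨L - 1, by omega⟩
  rw [hK] at hcount hn3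
  have hpow : (0:ℝ) < (3:ℝ) ^ K := by positivity
  have hlog3 : Real.log 3 ≤ 1.4 := by
    have h4 : Real.log 3 ≤ Real.log 4 := Real.log_le_log (by norm_num) (by norm_num)
    have : Real.log 4 = 2 * Real.log 2 := by
      rw [show (4:ℝ) = 2 ^ 2 by norm_num, Real.log_pow]
      push_cast; ring
    nlinarith [Real.log_two_lt_d9]
  have hncast : (n : ℝ) ≤ (3:ℝ) ^ (K + 2) := by
    have : (n : ℝ) < ((3 ^ (K + 1 + 1) : ℕ) : ℝ) := by exact_mod_cast hn3
    push_cast at this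
    linarith [this]
  have hlogn : Real.log n ≤ ((K:ℝ) + 2) * 1.4 := by
    have h1 : Real.log n ≤ Real.log ((3:ℝ) ^ (K + 2)) :=
      Real.log_le_log (by positivity) hncast
    rw [Real.log_pow] at h1
    push_cast at h1
    nlinarith [hlog3, Nat.cast_nonneg (α := ℝ) K]
  have hlogn0 : 0 ≤ Real.log n := Real.log_nonneg (by exact_mod_cast by omega : (1:ℝ) ≤ n)
  have htarget : (1/50 : ℝ) * n * Real.log n ≤ ((K:ℝ) + 1) * 3 ^ K := by
    have hn0 : (0:ℝ) ≤ n := Nat.cast_nonneg n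
    have h2 : (1/50 : ℝ) * n * Real.log n ≤ (1/50) * (3:ℝ) ^ (K+2) * (((K:ℝ) + 2) * 1.4) := by
      apply mul_le_mul
      · nlinarith [hncast]
      · exact hlogn
      · exact hlogn0
      · positivity
    have e : (3:ℝ) ^ (K + 2) = 9 * 3 ^ K := by ring
    rw [e] at h2
    nlinarith [hpow, Nat.cast_nonneg (α := ℝ) K]
  calc (1/50 : ℝ) * n * Real.log n ≤ ((K:ℝ) + 1) * 3 ^ K := htarget
    _ = (((K + 1) * 3 ^ ((K + 1) - 1) : ℕ) : ℝ) := by push_cast; ring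
    _ ≤ (areaTripleCount2 S 1 : ℝ) := by exact_mod_cast hcount
end

section
/- Let S be a set of n points in the plane ℝ² that spans at least one nondegenerate triangle, and let A > 0 be the minimum area over all nondegenerate triangles spanned by S. Then the number of unordered triples of distinct points of S forming a triangle of area exactly A is at most n² − n. -/
open scoped Classical

/-- The set of areas of nondegenerate triangles spanned by `S`. -/
def posAreaSet2 (S : Finset Plane) : Set ℝ :=
  {x : ℝ | ∃ a ∈ S, ∃ b ∈ S, ∃ c ∈ S, 0 < triArea2 a b c ∧ triArea2 a b c = x}

/- ### Auxiliary definitions -/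

def det2 (a b c : Plane) : ℝ :=
  (b 0 - a 0) * (c 1 - a 1) - (b 1 - a 1) * (c 0 - a 0)

def d2 (p q : Plane) : ℝ := (q 0 - p 0) ^ 2 + (q 1 - p 1) ^ 2

lemma triArea2_eq_det (a b c : Plane) : triArea2 a b c = |det2 a b c| / 2 := rfl

lemma det2_cyc (a b c : Plane) : det2 b c a = det2 a b c := by unfold det2; ring

lemma det2_swap (a b c : Plane) : det2 b a c = - det2 a b c := by unfold det2; ring

lemma det2_swap23 (a b c : Plane) : det2 a c b = - det2 a b c := by unfold det2; ring

lemma det2_self (a c : Plane) : det2 a a c = 0 := by unfold det2; ring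

lemma d2_comm (p q : Plane) : d2 p q = d2 q p := by unfold d2; ring

lemma plane_ext (c c' : Plane) (h0 : c 0 = c' 0) (h1 : c 1 = c' 1) : c = c' := by
  ext i
  fin_cases i
  · exact h0
  · exact h1

/- ### The algebraic core -/

lemma core_abs (A L x y : ℝ) (hA : 0 < A) (hL : 0 < L)
    (iv : x^2 + (2*A)^2 ≤ L^2) (iv2 : (x-L)^2 + (2*A)^2 ≤ L^2)
    (iw : y^2 + (2*A)^2 ≤ L^2) (iw2 : (y-L)^2 + (2*A)^2 ≤ L^2)
    (hm : L^2 ≤ (x-y)^2) : False := by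
  rcases le_total x y with h | h
  · nlinarith [sq_nonneg (x+y-L), sq_nonneg (y-x+L), sq_nonneg (y-x-L), mul_pos hA hL]
  · nlinarith [sq_nonneg (x+y-L), sq_nonneg (x-y+L), sq_nonneg (x-y-L), mul_pos hA hL]

lemma core_alg (A u0 u1 v0 v1 w0 w1 : ℝ) (hA : 0 < A)
    (h1 : u0*v1 - u1*v0 = 2*A) (h2 : u0*w1 - u1*w0 = 2*A)
    (hv : v0^2+v1^2 ≤ u0^2+u1^2)
    (hv2 : (v0-u0)^2+(v1-u1)^2 ≤ u0^2+u1^2)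
    (hw : w0^2+w1^2 ≤ u0^2+u1^2)
    (hw2 : (w0-u0)^2+(w1-u1)^2 ≤ u0^2+u1^2)
    (hmin : 2*A ≤ |v0*w1 - v1*w0|) : False := by
  have hL0 : 0 < u0^2+u1^2 := by
    rcases lt_or_ge 0 (u0^2+u1^2) with h | h
    · exact h
    · have h0 : u0 = 0 ∧ u1 = 0 := by
        constructor <;> nlinarith [sq_nonneg u0, sq_nonneg u1]
      rw [h0.1, h0.2] at h1; nlinarith
  have iv : (v0*u0+v1*u1)^2 + (2*A)^2 ≤ (u0^2+u1^2)^2 := by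
    have id1 : (v0*u0+v1*u1)^2 + (2*A)^2 = (u0^2+u1^2)*(v0^2+v1^2) := by
      linear_combination (-(2*A) - (u0*v1 - u1*v0)) * h1
    linarith [mul_le_mul_of_nonneg_left hv hL0.le, pow_two (u0^2+u1^2)]
  have iv2 : ((v0*u0+v1*u1)-(u0^2+u1^2))^2 + (2*A)^2 ≤ (u0^2+u1^2)^2 := by
    have id1 : ((v0*u0+v1*u1)-(u0^2+u1^2))^2 + (2*A)^2
        = (u0^2+u1^2)*((v0-u0)^2+(v1-u1)^2) := by
      linear_combination (-(2*A) - (u0*v1 - u1*v0)) * h1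
    linarith [mul_le_mul_of_nonneg_left hv2 hL0.le, pow_two (u0^2+u1^2)]
  have iw : (w0*u0+w1*u1)^2 + (2*A)^2 ≤ (u0^2+u1^2)^2 := by
    have id1 : (w0*u0+w1*u1)^2 + (2*A)^2 = (u0^2+u1^2)*(w0^2+w1^2) := by
      linear_combination (-(2*A) - (u0*w1 - u1*w0)) * h2
    linarith [mul_le_mul_of_nonneg_left hw hL0.le, pow_two (u0^2+u1^2)]
  have iw2 : ((w0*u0+w1*u1)-(u0^2+u1^2))^2 + (2*A)^2 ≤ (u0^2+u1^2)^2 := by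
    have id1 : ((w0*u0+w1*u1)-(u0^2+u1^2))^2 + (2*A)^2
        = (u0^2+u1^2)*((w0-u0)^2+(w1-u1)^2) := by
      linear_combination (-(2*A) - (u0*w1 - u1*w0)) * h2
    linarith [mul_le_mul_of_nonneg_left hw2 hL0.le, pow_two (u0^2+u1^2)]
  have idet : (v0*w1 - v1*w0) * (u0^2+u1^2)
      = ((v0*u0+v1*u1) - (w0*u0+w1*u1)) * (2*A) := by
    linear_combination (v0*u0+v1*u1)*h2 - (w0*u0+w1*u1)*h1
  have habs : |v0*w1 - v1*w0| * (u0^2+u1^2)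
      = |(v0*u0+v1*u1) - (w0*u0+w1*u1)| * (2*A) := by
    rw [← abs_of_pos hL0, ← abs_mul, idet, abs_mul,
      abs_of_pos (by linarith : (0:ℝ) < 2*A)]
  have hm : (u0^2+u1^2) ≤ |(v0*u0+v1*u1) - (w0*u0+w1*u1)| := by
    have h1' : 2*A*(u0^2+u1^2) ≤ |(v0*u0+v1*u1) - (w0*u0+w1*u1)| * (2*A) := by
      rw [← habs]; exact mul_le_mul_of_nonneg_right hmin hL0.le
    nlinarith
  have hm2 : (u0^2+u1^2)^2 ≤ ((v0*u0+v1*u1) - (w0*u0+w1*u1))^2 := by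
    rw [← sq_abs ((v0*u0+v1*u1) - (w0*u0+w1*u1))]
    exact pow_le_pow_left₀ hL0.le hm 2
  exact core_abs A (u0^2+u1^2) (v0*u0+v1*u1) (w0*u0+w1*u1) hA hL0 iv iv2 iw iw2 hm2

/- ### Uniqueness of the apex over a fixed longest oriented base -/

lemma apex_unique (A : ℝ) (hA : 0 < A) (a b c c' : Plane)
    (h1 : det2 a b c = 2*A) (h2 : det2 a b c' = 2*A)
    (e1 : d2 a c ≤ d2 a b) (e2 : d2 b c ≤ d2 a b)
    (e3 : d2 a c' ≤ d2 a b) (e4 : d2 b c' ≤ d2 a b)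
    (hmin : det2 a c c' ≠ 0 → 2*A ≤ |det2 a c c'|) : c = c' := by
  by_cases h0 : det2 a c c' = 0
  · unfold det2 at h1 h2 h0
    apply plane_ext
    · have key : 2*A*(c 0 - c' 0) = 0 := by
        linear_combination (c' 0 - a 0)*h1 - (c 0 - a 0)*h2 + (b 0 - a 0)*h0
      rcases mul_eq_zero.mp key with h | h
      · linarith
      · linarith
    · have key : 2*A*(c 1 - c' 1) = 0 := by
        linear_combination (c' 1 - a 1)*h1 - (c 1 - a 1)*h2 + (b 1 - a 1)*h0
      rcases mul_eq_zero.mp key with h | h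
      · linarith
      · linarith
  · exfalso
    have hm := hmin h0
    unfold det2 at h1 h2 hm
    unfold d2 at e1 e2 e3 e4
    refine core_alg A (b 0 - a 0) (b 1 - a 1) (c 0 - a 0) (c 1 - a 1)
      (c' 0 - a 0) (c' 1 - a 1) hA h1 h2 ?_ ?_ ?_ ?_ hm
    · linarith [e1]
    · nlinarith [e2]
    · linarith [e3]
    · nlinarith [e4]

/- ### Choosing a canonical oriented longest base for a triangle -/

lemma orient (a b c : Plane) (hd : det2 a b c ≠ 0)
    (h1 : d2 a c ≤ d2 a b) (h2 : d2 b c ≤ d2 a b) :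
    ∃ p q r : Plane, ({p, q, r} : Finset Plane) = {a, b, c} ∧
      triArea2 p q r = triArea2 a b c ∧
      d2 p r ≤ d2 p q ∧ d2 q r ≤ d2 p q ∧ 0 < det2 p q r := by
  rcases hd.lt_or_gt with h | h
  · refine ⟨b, a, c, ?_, ?_, ?_, ?_, ?_⟩
    · ext x; simp [Finset.mem_insert]; tauto
    · show |det2 b a c| / 2 = |det2 a b c| / 2
      rw [det2_swap, abs_neg]
    · rw [d2_comm b a]; exact h2
    · rw [d2_comm b a]; exact h1
    · rw [det2_swap]; linarith
  · exact ⟨a, b, c, rfl, rfl, h1, h2, h⟩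

lemma exists_good (a b c : Plane) (hd : det2 a b c ≠ 0) :
    ∃ p q r : Plane, ({p, q, r} : Finset Plane) = {a, b, c} ∧
      triArea2 p q r = triArea2 a b c ∧
      d2 p r ≤ d2 p q ∧ d2 q r ≤ d2 p q ∧ 0 < det2 p q r := by
  have hcyc : triArea2 b c a = triArea2 a b c := by
    show |det2 b c a| / 2 = |det2 a b c| / 2
    rw [det2_cyc]
  have hsw : triArea2 a c b = triArea2 a b c := by
    show |det2 a c b| / 2 = |det2 a b c| / 2
    rw [det2_swap23, abs_neg]
  have hscyc : ({b, c, a} : Finset Plane) = {a, b, c} := by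
    ext x; simp [Finset.mem_insert]; tauto
  have hssw : ({a, c, b} : Finset Plane) = {a, b, c} := by
    ext x; simp [Finset.mem_insert]; tauto
  rcases le_total (d2 a c) (d2 a b) with h1 | h1
  · rcases le_total (d2 b c) (d2 a b) with h2 | h2
    · exact orient a b c hd h1 h2
    · obtain ⟨p, q, r, hs, har, f1, f2, hpos⟩ :=
        orient b c a (by rw [det2_cyc]; exact hd)
          (by rw [d2_comm b a]; exact h2)
          (by rw [d2_comm c a]; exact h1.trans h2)
      exact ⟨p, q, r, hs.trans hscyc, har.trans hcyc, f1, f2, hpos⟩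
  · rcases le_total (d2 b c) (d2 a c) with h2 | h2
    · obtain ⟨p, q, r, hs, har, f1, f2, hpos⟩ :=
        orient a c b (by rw [det2_swap23]; exact neg_ne_zero.mpr hd)
          h1 (by rw [d2_comm c b]; exact h2)
      exact ⟨p, q, r, hs.trans hssw, har.trans hsw, f1, f2, hpos⟩
    · obtain ⟨p, q, r, hs, har, f1, f2, hpos⟩ :=
        orient b c a (by rw [det2_cyc]; exact hd)
          (by rw [d2_comm b a]; exact h1.trans h2)
          (by rw [d2_comm c a]; exact h2)
      exact ⟨p, q, r, hs.trans hscyc, har.trans hcyc, f1, f2, hpos⟩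

/- ### The canonical choice -/

def Good (A : ℝ) (T : Finset Plane) (p : Plane × Plane × Plane) : Prop :=
  T = {p.1, p.2.1, p.2.2} ∧ triArea2 p.1 p.2.1 p.2.2 = A ∧
  d2 p.1 p.2.2 ≤ d2 p.1 p.2.1 ∧ d2 p.2.1 p.2.2 ≤ d2 p.1 p.2.1 ∧
  0 < det2 p.1 p.2.1 p.2.2

noncomputable def pick (A : ℝ) (T : Finset Plane) : Plane × Plane × Plane :=
  if h : ∃ p : Plane × Plane × Plane, Good A T p then h.choose else (0, 0, 0)

lemma pick_spec (A : ℝ) (T : Finset Plane)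
    (h : ∃ p : Plane × Plane × Plane, Good A T p) : Good A T (pick A T) := by
  unfold pick
  rw [dif_pos h]
  exact h.choose_spec

/-- `n` points in the plane span at most `n² − n` triangles of minimum
(nonzero) area. -/
theorem min_area_triangles_plane (n : ℕ) (S : Finset Plane) (hS : S.card = n)
    (A : ℝ) (hApos : 0 < A) (hA : IsLeast (posAreaSet2 S) A) :
    areaTripleCount2 S A ≤ n ^ 2 - n := by
  classical
  set F : Finset (Finset Plane) := (S.powersetCard 3).filter
    (fun T => ∃ a b c : Plane, T = {a, b, c} ∧ triArea2 a b c = A) with hF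
  have hset : {T : Finset Plane | T ⊆ S ∧ T.card = 3 ∧
      ∃ a b c : Plane, T = {a, b, c} ∧ triArea2 a b c = A} = ↑F := by
    ext T
    simp only [hF, Finset.coe_filter, Finset.mem_powersetCard, Set.mem_setOf_eq,
      and_assoc]
  have hcount : areaTripleCount2 S A = F.card := by
    rw [areaTripleCount2, hset, Set.ncard_coe_finset]
  -- every triangle in `F` has a good ordering
  have hex : ∀ T ∈ F, ∃ p : Plane × Plane × Plane, Good A T p := by
    intro T hT
    rw [hF, Finset.mem_filter] at hT
    obtain ⟨-, a, b, c, hTe, harea⟩ := hT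
    have hd : det2 a b c ≠ 0 := by
      intro h
      rw [triArea2_eq_det, h, abs_zero] at harea
      simp at harea
      exact absurd harea.symm (ne_of_gt hApos)
    obtain ⟨p, q, r, hs, har, f1, f2, hpos⟩ := exists_good a b c hd
    exact ⟨(p, q, r), by rw [hTe, ← hs], by rw [har, harea], f1, f2, hpos⟩
  -- basic facts about `Good`
  have hsubS : ∀ T ∈ F, T ⊆ S := by
    intro T hT
    rw [hF, Finset.mem_filter, Finset.mem_powersetCard] at hT
    exact hT.1.1
  have hg1mem : ∀ T, ∀ p : Plane × Plane × Plane, Good A T p →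
      p.1 ∈ T ∧ p.2.1 ∈ T ∧ p.2.2 ∈ T := by
    intro T p hp
    rw [hp.1]
    refine ⟨?_, ?_, ?_⟩ <;> simp
  have hne : ∀ T, ∀ p : Plane × Plane × Plane, Good A T p → p.1 ≠ p.2.1 := by
    intro T p hp h
    have := hp.2.2.2.2
    rw [← h, det2_self] at this
    exact lt_irrefl 0 this
  -- the injection into ordered pairs
  have hinj : F.card ≤ S.offDiag.card := by
    apply Finset.card_le_card_of_injOn (fun T => ((pick A T).1, (pick A T).2.1))
    · intro T hT
      have hp := pick_spec A T (hex T hT)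
      have hmem := hg1mem T _ hp
      rw [Finset.mem_coe, Finset.mem_offDiag]
      exact ⟨hsubS T hT hmem.1, hsubS T hT hmem.2.1, hne T _ hp⟩
    · intro T hT T' hT' hgg
      simp only [Finset.mem_coe] at hT hT'
      have hp := pick_spec A T (hex T hT)
      have hp' := pick_spec A T' (hex T' hT')
      have hgg' : ((pick A T).1, (pick A T).2.1) = ((pick A T').1, (pick A T').2.1) := hgg
      have ha : (pick A T).1 = (pick A T').1 := (Prod.ext_iff.mp hgg').1
      have hb : (pick A T).2.1 = (pick A T').2.1 := (Prod.ext_iff.mp hgg').2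
      obtain ⟨ht1, ht2, ht3, ht4, ht5⟩ := hp
      obtain ⟨ht1', ht2', ht3', ht4', ht5'⟩ := hp'
      rw [← ha, ← hb] at ht1' ht2' ht3' ht4' ht5'
      have hdet : det2 (pick A T).1 (pick A T).2.1 (pick A T).2.2 = 2*A := by
        rw [triArea2_eq_det, abs_of_pos ht5] at ht2
        linarith
      have hdet' : det2 (pick A T).1 (pick A T).2.1 (pick A T').2.2 = 2*A := by
        rw [triArea2_eq_det, abs_of_pos ht5'] at ht2'
        linarith
      have haS : (pick A T).1 ∈ S :=
        hsubS T hT ((Finset.ext_iff.mp ht1 _).mpr (by simp))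
      have hcS : (pick A T).2.2 ∈ S :=
        hsubS T hT ((Finset.ext_iff.mp ht1 _).mpr (by simp))
      have hc'S : (pick A T').2.2 ∈ S :=
        hsubS T' hT' ((Finset.ext_iff.mp ht1' _).mpr (by simp))
      have hcc' : (pick A T).2.2 = (pick A T').2.2 := by
        refine apex_unique A hApos _ _ _ _ hdet hdet' ht3 ht4 ht3' ht4' ?_
        intro hd0
        have hpos : 0 < triArea2 (pick A T).1 (pick A T).2.2 (pick A T').2.2 := by
          rw [triArea2_eq_det]
          have := abs_pos.mpr hd0
          linarith
        have hle : A ≤ triArea2 (pick A T).1 (pick A T).2.2 (pick A T').2.2 :=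
          hA.2 ⟨_, haS, _, hcS, _, hc'S, hpos, rfl⟩
        rw [triArea2_eq_det] at hle
        linarith
      rw [ht1, ht1', hcc']
  calc areaTripleCount2 S A = F.card := hcount
    _ ≤ S.offDiag.card := hinj
    _ = n * n - n := by rw [Finset.offDiag_card, hS]
    _ = n ^ 2 - n := by rw [pow_two]
end

section
/- There is a constant C > 0 such that for every n and every set S of n points in the plane ℝ² in strictly convex position with n ≥ 3, with A > 0 the minimum area over all nondegenerate triangles spanned by S, the number of unordered triples of distinct points of S forming a triangle of area exactly A is at most C · n. -/
open scoped Classical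

/-- Twice the signed area. -/
def det3 (a b c : Plane) : ℝ :=
  (b 0 - a 0) * (c 1 - a 1) - (b 1 - a 1) * (c 0 - a 0)

lemma triArea2_eq_det3 (a b c : Plane) : triArea2 a b c = |det3 a b c| / 2 := rfl

lemma det3_cyclic (a b c : Plane) : det3 a b c = det3 b c a := by
  simp only [det3]; ring

lemma det3_swap (a b c : Plane) : det3 a c b = -det3 a b c := by
  simp only [det3]; ring

/-- An extreme point of the hull of `S` is not a nontrivial convex combination of
three other points of `S`. -/
lemma extreme_not_combo {S : Finset Plane} (hconv : StrictlyConvexPosition S)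
    {p u v w : Plane} (hp : p ∈ S) (hu : u ∈ S) (hv : v ∈ S) (hw : w ∈ S)
    (hpu : p ≠ u) (hpv : p ≠ v) (hpw : p ≠ w)
    {l m k : ℝ} (hl : 0 ≤ l) (hm : 0 ≤ m) (hk : 0 ≤ k) (hsum : l + m + k = 1)
    (heq : p = l • u + m • v + k • w) : False := by
  have hpe := hconv p hp
  rw [mem_extremePoints] at hpe
  obtain ⟨-, hext⟩ := hpe
  have hus : u ∈ convexHull ℝ (S : Set Plane) := subset_convexHull ℝ _ hu
  have hvs : v ∈ convexHull ℝ (S : Set Plane) := subset_convexHull ℝ _ hv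
  have hws : w ∈ convexHull ℝ (S : Set Plane) := subset_convexHull ℝ _ hw
  rcases eq_or_lt_of_le hl with hl1 | hl1
  · -- l = 0 : p is a combination of v and w
    have hmk : m + k = 1 := by linarith
    have heq2 : p = m • v + k • w := by
      rw [heq, ← hl1]; simp
    rcases eq_or_lt_of_le hm with hm1 | hm1
    · -- m = 0, k = 1
      have : p = w := by rw [heq2, ← hm1]; simp [show k = 1 by linarith]
      exact hpw this
    · rcases eq_or_lt_of_le hk with hk1 | hk1
      · have : p = v := by rw [heq2, ← hk1]; simp [show m = 1 by linarith]
        exact hpv this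
      · have : p ∈ openSegment ℝ v w := ⟨m, k, hm1, hk1, hmk, heq2.symm⟩
        exact hpv ((hext v hvs w hws this).1.symm)
  · -- l > 0
    rcases eq_or_lt_of_le (show l ≤ 1 by linarith) with hl2 | hl2
    · have : p = u := by rw [heq, hl2]; simp [show m = 0 by linarith, show k = 0 by linarith]
      exact hpu this
    · -- 0 < l < 1
      set r : ℝ := 1 - l with hr
      have hrpos : 0 < r := by simp [hr]; linarith
      set q : Plane := (m / r) • v + (k / r) • w with hq
      have hqseg : q ∈ segment ℝ v w :=
        ⟨m / r, k / r, by positivity, by positivity, by field_simp; linarith, rfl⟩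
      have hqs : q ∈ convexHull ℝ (S : Set Plane) :=
        ((convex_convexHull ℝ _).segment_subset hvs hws) hqseg
      have heq3 : l • u + r • q = p := by
        rw [heq, hq, smul_add, smul_smul, smul_smul,
          mul_div_cancel₀ _ (ne_of_gt hrpos), mul_div_cancel₀ _ (ne_of_gt hrpos), add_assoc]
      have : p ∈ openSegment ℝ u q := ⟨l, r, hl1, hrpos, by simp [hr], heq3⟩
      exact hpu ((hext u hus q hqs this).1.symm)

/-- No three distinct points of a strictly convex set are collinear. -/
lemma no_three_collinear {S : Finset Plane} (hconv : StrictlyConvexPosition S)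
    {a b c : Plane} (ha : a ∈ S) (hb : b ∈ S) (hc : c ∈ S)
    (hab : a ≠ b) (hac : a ≠ c) (hbc : b ≠ c) : det3 a b c ≠ 0 := by
  intro hdet
  -- get c = (1-t) • a + t • b
  have hvec : ∃ t : ℝ, c = (1 - t) • a + t • b := by
    by_cases h0 : b 0 - a 0 ≠ 0
    · refine ⟨(c 0 - a 0) / (b 0 - a 0), ?_⟩
      ext i
      fin_cases i <;>
        simp only [PiLp.add_apply, PiLp.smul_apply, smul_eq_mul] <;> field_simp
      · simp only [Fin.mk_zero]; ring
      · have : (b 0 - a 0) * (c 1 - a 1) = (b 1 - a 1) * (c 0 - a 0) := by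
          simp only [det3] at hdet; linarith
        simp only [Fin.mk_one]
        nlinarith [this]
    · push_neg at h0
      have h1 : b 1 - a 1 ≠ 0 := by
        intro h1
        apply hab
        ext i
        fin_cases i
        · show a 0 = b 0; linarith
        · show a 1 = b 1; linarith
      refine ⟨(c 1 - a 1) / (b 1 - a 1), ?_⟩
      have hc0 : c 0 = a 0 := by
        have h2 : (b 1 - a 1) * (c 0 - a 0) = 0 := by
          simp only [det3] at hdet
          linear_combination (c 1 - a 1) * h0 - hdet
        rcases mul_eq_zero.1 h2 with h | h
        · exact absurd h h1
        · linarith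
      have hb0 : b 0 = a 0 := by linarith
      ext i
      fin_cases i <;>
        simp only [Fin.mk_zero, Fin.mk_one, PiLp.add_apply, PiLp.smul_apply, smul_eq_mul]
      · rw [hc0, hb0]; ring
      · field_simp
        ring
  obtain ⟨t, hct⟩ := hvec
  have ht0 : t ≠ 0 := by
    intro h; apply hac; rw [hct, h]; simp
  have ht1 : t ≠ 1 := by
    intro h; apply hbc; rw [hct, h]; simp
  -- extreme point machinery
  have hmean : ∀ p : Plane, p ∈ S →
      ∀ x y : Plane, x ∈ S → y ∈ S → p ∈ openSegment ℝ x y → x = p := by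
    intro p hpS x y hx hy hseg
    have hpe := hconv p hpS
    rw [mem_extremePoints] at hpe
    exact (hpe.2 x (subset_convexHull ℝ _ hx) y (subset_convexHull ℝ _ hy) hseg).1
  rcases lt_trichotomy t 0 with ht | ht | ht
  · -- a ∈ openSegment c b : a = (1/(1-t)) • c + (-t/(1-t)) • b
    have h1t : (0:ℝ) < 1 - t := by linarith
    have hseg : a ∈ openSegment ℝ c b := by
      refine ⟨1 / (1 - t), -t / (1 - t), by positivity,
        div_pos (by linarith) h1t, by field_simp; ring, ?_⟩
      rw [hct]
      ext i
      fin_cases i <;>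
        simp only [PiLp.add_apply, PiLp.smul_apply, smul_eq_mul] <;> field_simp <;> ring
    exact hac (hmean a ha c b hc hb hseg).symm
  · exact ht0 ht
  · rcases lt_trichotomy t 1 with ht' | ht' | ht'
    · -- c ∈ openSegment a b
      have hseg : c ∈ openSegment ℝ a b := ⟨1 - t, t, by linarith, ht, by ring, hct.symm⟩
      exact hac (hmean c hc a b ha hb hseg)
    · exact ht1 ht'
    · -- b ∈ openSegment a c : b = (1 - 1/t) • a + (1/t) • c
      have hseg : b ∈ openSegment ℝ a c := by
        refine ⟨1 - 1 / t, 1 / t, ?_, by positivity, by ring, ?_⟩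
        · have : 1 / t < 1 := by rw [div_lt_one (by linarith)]; linarith
          linarith
        · rw [hct]
          ext i
          fin_cases i <;>
            simp only [PiLp.add_apply, PiLp.smul_apply, smul_eq_mul] <;> field_simp <;> ring
      exact hab (hmean b hb a c ha hc hseg)

/-- Any nondegenerate triangle has `|det3| ≥ 2A` where `A` is the minimum area. -/
lemma min_det {S : Finset Plane} (hconv : StrictlyConvexPosition S) {A : ℝ}
    (hleast : IsLeast (posAreaSet2 S) A)
    {p q r : Plane} (hp : p ∈ S) (hq : q ∈ S) (hr : r ∈ S)
    (hpq : p ≠ q) (hpr : p ≠ r) (hqr : q ≠ r) : 2 * A ≤ |det3 p q r| := by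
  have hne := no_three_collinear hconv hp hq hr hpq hpr hqr
  have hpos : 0 < triArea2 p q r := by
    rw [triArea2_eq_det3]
    positivity
  have hmem : triArea2 p q r ∈ posAreaSet2 S := ⟨p, hp, q, hq, r, hr, hpos, rfl⟩
  have := hleast.2 hmem
  rw [triArea2_eq_det3] at this
  linarith

/-- Core geometric lemma: a minimum-area triangle `abc` (positively oriented) cannot
have points of `S` strictly beyond side `ab` and strictly beyond side `bc`. -/
lemma core_lemma {S : Finset Plane} (hconv : StrictlyConvexPosition S) {A : ℝ}
    (hA : 0 < A) (hleast : IsLeast (posAreaSet2 S) A)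
    {a b c d e : Plane} (ha : a ∈ S) (hb : b ∈ S) (hc : c ∈ S) (hd : d ∈ S) (he : e ∈ S)
    (hD : det3 a b c = 2 * A)
    (hda : d ≠ a) (hdb : d ≠ b) (hYd : det3 a b d < 0)
    (heb : e ≠ b) (hec : e ≠ c) (hWe : det3 b c e < 0) : False := by
  have hDpos : 0 < det3 a b c := by rw [hD]; linarith
  have hab : a ≠ b := by rintro rfl; simp only [det3] at hDpos; nlinarith
  have hac : a ≠ c := by
    rintro rfl
    have : det3 a b a = 0 := by simp only [det3]; ring
    rw [this] at hDpos; exact lt_irrefl _ hDpos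
  have hbc : b ≠ c := by
    rintro rfl
    have : det3 a b b = 0 := by simp only [det3]; ring
    rw [this] at hDpos; exact lt_irrefl _ hDpos
  have hdc : d ≠ c := by rintro rfl; linarith
  have hea : e ≠ a := by
    intro h
    rw [h, ← det3_cyclic a b c] at hWe; linarith
  -- abbreviations
  set Xd := det3 a d c with hXd_def
  set Yd := det3 a b d with hYd_def
  set Xe := det3 a e c with hXe_def
  set Ye := det3 a b e with hYe_def
  set We := det3 e b c with hWe_def
  have hWe' : We < 0 := by rw [hWe_def, det3_cyclic]; exact hWe
  -- Step 1 : Yd ≤ -2A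
  have hYd2 : Yd ≤ -(2 * A) := by
    have h := min_det hconv hleast ha hb hd hab (Ne.symm hda) (Ne.symm hdb)
    rw [← hYd_def, abs_of_neg hYd] at h; linarith
  -- Step 4 : We ≤ -2A
  have hWe2 : We ≤ -(2 * A) := by
    have h := min_det hconv hleast he hb hc heb hec hbc
    rw [← hWe_def, abs_of_neg hWe'] at h; linarith
  -- Step 2 : Xd ≥ 2A
  have hXd2 : 2 * A ≤ Xd := by
    by_contra hcon
    push_neg at hcon
    have h := min_det hconv hleast ha hd hc (Ne.symm hda) hac hdc
    rw [← hXd_def] at h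
    have hXdneg : Xd ≤ -(2 * A) := by
      rcases abs_cases Xd with ⟨h1, _⟩ | ⟨h1, _⟩ <;> linarith
    set s : ℝ := 2 * A - Xd - Yd with hs_def
    have hs : 0 < s := by rw [hs_def]; linarith
    refine extreme_not_combo hconv ha hd hb hc (Ne.symm hda) hab hac
      (l := 2 * A / s) (m := -Xd / s) (k := -Yd / s)
      (by positivity) (div_nonneg (by linarith) hs.le) (div_nonneg (by linarith) hs.le)
      (by field_simp; ring) ?_
    have key : ∀ i : Fin 2, s * a i = 2 * A * d i - Xd * b i - Yd * c i := by
      intro i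
      rw [hs_def, hXd_def, hYd_def, ← hD]
      fin_cases i <;>
        simp only [det3, Fin.mk_zero, Fin.mk_one] <;> ring
    ext i
    simp only [PiLp.add_apply, PiLp.smul_apply, smul_eq_mul]
    have := key i
    field_simp
    linarith [this]
  -- Step 5 : Xe ≥ 2A
  have hXe2 : 2 * A ≤ Xe := by
    by_contra hcon
    push_neg at hcon
    have h := min_det hconv hleast ha he hc hea.symm hac hec
    rw [← hXe_def] at h
    have hXeneg : Xe ≤ -(2 * A) := by
      rcases abs_cases Xe with ⟨h1, _⟩ | ⟨h1, _⟩ <;> linarith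
    have hsum_e : We + Xe + Ye = 2 * A := by
      rw [hWe_def, hXe_def, hYe_def, ← hD]; simp only [det3]; ring
    have hYe6 : 0 < Ye := by linarith
    refine extreme_not_combo hconv hc he ha hb hec.symm hac.symm hbc.symm
      (l := 2 * A / Ye) (m := -We / Ye) (k := -Xe / Ye)
      (by positivity) (div_nonneg (by linarith) hYe6.le) (div_nonneg (by linarith) hYe6.le)
      (by field_simp; linarith) ?_
    have key : ∀ i : Fin 2, Ye * c i = 2 * A * e i - We * a i - Xe * b i := by
      intro i
      rw [hYe_def, hWe_def, hXe_def, ← hD]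
      fin_cases i <;>
        simp only [det3, Fin.mk_zero, Fin.mk_one] <;> ring
    ext i
    simp only [PiLp.add_apply, PiLp.smul_apply, smul_eq_mul]
    have := key i
    field_simp
    linarith [this]
  -- Step 6 : Ye ≥ 2A
  have hYe2 : 2 * A ≤ Ye := by
    by_contra hcon
    push_neg at hcon
    have h := min_det hconv hleast ha hb he hab hea.symm heb.symm
    rw [← hYe_def] at h
    have hYeneg : Ye ≤ -(2 * A) := by
      rcases abs_cases Ye with ⟨h1, _⟩ | ⟨h1, _⟩ <;> linarith
    have hXepos : 0 < Xe := by linarith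
    refine extreme_not_combo hconv hb he ha hc heb.symm hab.symm hbc
      (l := 2 * A / Xe) (m := -We / Xe) (k := -Ye / Xe)
      (by positivity) (div_nonneg (by linarith) hXepos.le) (div_nonneg (by linarith) hXepos.le)
      (?_) ?_
    · have hsum_e : We + Xe + Ye = 2 * A := by
        rw [hWe_def, hXe_def, hYe_def, ← hD]; simp only [det3]; ring
      field_simp; linarith
    have key : ∀ i : Fin 2, Xe * b i = 2 * A * e i - We * a i - Ye * c i := by
      intro i
      rw [hYe_def, hWe_def, hXe_def, ← hD]
      fin_cases i <;>
        simp only [det3, Fin.mk_zero, Fin.mk_one] <;> ring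
    ext i
    simp only [PiLp.add_apply, PiLp.smul_apply, smul_eq_mul]
    have := key i
    field_simp
    linarith [this]
  -- Final step
  set G : ℝ := Xd * Ye - Xe * Yd with hG_def
  have hGpos : 0 < G := by nlinarith
  have hknum : 0 ≤ G - 2 * A * Ye + 2 * A * Yd := by nlinarith
  refine extreme_not_combo hconv hb hd he ha hdb.symm heb.symm hab.symm
    (l := 2 * A * Ye / G) (m := -(2 * A * Yd) / G)
    (k := (G - 2 * A * Ye + 2 * A * Yd) / G)
    (div_nonneg (by nlinarith) hGpos.le) (div_nonneg (by nlinarith) hGpos.le)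
    (div_nonneg hknum hGpos.le) (by field_simp; ring) ?_
  have key : ∀ i : Fin 2,
      G * b i = 2 * A * Ye * d i - 2 * A * Yd * e i
        + (G - 2 * A * Ye + 2 * A * Yd) * a i := by
    intro i
    rw [hG_def, hXd_def, hYd_def, hXe_def, hYe_def, ← hD]
    fin_cases i <;>
      simp only [det3, Fin.mk_zero, Fin.mk_one] <;> ring
  ext i
  simp only [PiLp.add_apply, PiLp.smul_apply, smul_eq_mul]
  have := key i
  field_simp
  linarith [this]

/-- `(a, b)` is a (directed) hull edge: every other point is strictly to its left. -/
def IsEdge (S : Finset Plane) (a b : Plane) : Prop :=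
  ∀ p ∈ S, p ≠ a → p ≠ b → 0 < det3 a b p

/-- Every minimum-area triangle (positively oriented) has a hull edge among
`(a, b)` and `(b, c)`. -/
lemma exists_edge {S : Finset Plane} (hconv : StrictlyConvexPosition S) {A : ℝ}
    (hA : 0 < A) (hleast : IsLeast (posAreaSet2 S) A)
    {a b c : Plane} (ha : a ∈ S) (hb : b ∈ S) (hc : c ∈ S)
    (hD : det3 a b c = 2 * A) : IsEdge S a b ∨ IsEdge S b c := by
  have hDpos : 0 < det3 a b c := by rw [hD]; linarith
  have hab : a ≠ b := by
    intro h; rw [h] at hDpos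
    have : det3 b b c = 0 := by simp only [det3]; ring
    rw [this] at hDpos; exact lt_irrefl _ hDpos
  have hbc : b ≠ c := by
    intro h; rw [h] at hDpos
    have : det3 a c c = 0 := by simp only [det3]; ring
    rw [this] at hDpos; exact lt_irrefl _ hDpos
  by_contra hcon
  push_neg at hcon
  obtain ⟨h1, h2⟩ := hcon
  rw [IsEdge] at h1 h2
  push_neg at h1 h2
  obtain ⟨d, hdS, hda, hdb, hd3⟩ := h1
  obtain ⟨e, heS, heb, hec, he3⟩ := h2
  have hYd : det3 a b d < 0 :=
    hd3.lt_of_ne (no_three_collinear hconv ha hb hdS hab (Ne.symm hda) (Ne.symm hdb))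
  have hWe : det3 b c e < 0 :=
    he3.lt_of_ne (no_three_collinear hconv hb hc heS hbc (Ne.symm heb) (Ne.symm hec))
  exact core_lemma hconv hA hleast ha hb hc hdS heS hD hda hdb hYd heb hec hWe

/-- At most two points of `S` complete a fixed segment to a triangle of
doubled signed area exactly `2A`. -/
lemma third_vertex_card {S : Finset Plane} (hconv : StrictlyConvexPosition S) {A : ℝ}
    (hA : 0 < A) {u v : Plane} (huv : u ≠ v) :
    (S.filter (fun w => det3 u v w = 2 * A)).card ≤ 2 := by
  by_contra h
  push_neg at h
  rw [Finset.two_lt_card] at h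
  obtain ⟨w1, hw1, w2, hw2, w3, hw3, h12, h13, h23⟩ := h
  rw [Finset.mem_filter] at hw1 hw2 hw3
  obtain ⟨hw1S, e1⟩ := hw1
  obtain ⟨hw2S, e2⟩ := hw2
  obtain ⟨hw3S, e3⟩ := hw3
  simp only [det3] at e1 e2 e3
  have d21 : (v 0 - u 0) * (w2 1 - w1 1) - (v 1 - u 1) * (w2 0 - w1 0) = 0 := by
    linear_combination e2 - e1
  have d31 : (v 0 - u 0) * (w3 1 - w1 1) - (v 1 - u 1) * (w3 0 - w1 0) = 0 := by
    linear_combination e3 - e1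
  have key0 : (v 0 - u 0) * det3 w1 w2 w3 = 0 := by
    simp only [det3]
    linear_combination (w2 0 - w1 0) * d31 - (w3 0 - w1 0) * d21
  have key1 : (v 1 - u 1) * det3 w1 w2 w3 = 0 := by
    simp only [det3]
    linear_combination (w2 1 - w1 1) * d31 - (w3 1 - w1 1) * d21
  have hdet0 : det3 w1 w2 w3 = 0 := by
    by_cases h0 : v 0 - u 0 = 0
    · by_cases h1 : v 1 - u 1 = 0
      · exfalso
        apply huv
        ext i
        fin_cases i
        · show u 0 = v 0; linarith
        · show u 1 = v 1; linarith
      · exact (mul_eq_zero.1 key1).resolve_left h1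
    · exact (mul_eq_zero.1 key0).resolve_left h0
  exact no_three_collinear hconv hw1S hw2S hw3S h12 h13 h23 hdet0

/-- The second endpoint of a directed hull edge is unique. -/
lemma edge_unique {S : Finset Plane} {u v v' : Plane}
    (h1 : IsEdge S u v) (h2 : IsEdge S u v') (hv : v ∈ S) (hv' : v' ∈ S)
    (huv : u ≠ v) (huv' : u ≠ v') : v = v' := by
  by_contra hne
  have p1 := h1 v' hv' (Ne.symm huv') (Ne.symm hne)
  have p2 := h2 v hv (Ne.symm huv) hne
  rw [det3_swap u v v'] at p2
  linarith

/-- `n ≥ 3` points in strictly convex position in the plane span at most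
`O(n)` triangles of minimum (nonzero) area. -/
theorem convex_position_min_area_linear :
    ∃ C : ℝ, 0 < C ∧ ∀ (n : ℕ) (S : Finset Plane), 3 ≤ n → S.card = n →
      StrictlyConvexPosition S →
      ∀ A : ℝ, 0 < A → IsLeast (posAreaSet2 S) A →
        (areaTripleCount2 S A : ℝ) ≤ C * n := by
  refine ⟨2, by norm_num, ?_⟩
  intro n S hn3 hcard hconv A hA hleast
  classical
  set 𝒯 : Finset (Finset Plane) := (S.powersetCard 3).filter
    (fun T => ∃ a b c : Plane, T = {a, b, c} ∧ triArea2 a b c = A) with h𝒯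
  have hcount : areaTripleCount2 S A = 𝒯.card := by
    have hset : {T : Finset Plane | T ⊆ S ∧ T.card = 3 ∧
        ∃ a b c : Plane, T = {a, b, c} ∧ triArea2 a b c = A} = ↑𝒯 := by
      ext T
      simp only [h𝒯, Finset.coe_filter, Finset.mem_powersetCard, Set.mem_setOf_eq, and_assoc]
    rw [areaTripleCount2, hset, Set.ncard_coe_finset]
  -- representation predicate
  set R : Finset Plane → Plane × Plane × Plane → Prop := fun T p =>
    IsEdge S p.1 p.2.1 ∧ p.1 ∈ S ∧ p.2.1 ∈ S ∧ p.2.2 ∈ S ∧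
      T = {p.1, p.2.1, p.2.2} ∧ det3 p.1 p.2.1 p.2.2 = 2 * A with hR
  have hrep : ∀ T ∈ 𝒯, ∃ p : Plane × Plane × Plane, R T p := by
    intro T hT
    rw [h𝒯, Finset.mem_filter, Finset.mem_powersetCard] at hT
    obtain ⟨⟨hTS, _⟩, x, y, z, hTxyz, harea⟩ := hT
    have hx : x ∈ S := hTS (by rw [hTxyz]; simp)
    have hy : y ∈ S := hTS (by rw [hTxyz]; simp)
    have hz : z ∈ S := hTS (by rw [hTxyz]; simp)
    have habs : |det3 x y z| = 2 * A := by
      rw [triArea2_eq_det3] at harea; linarith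
    rcases abs_cases (det3 x y z) with ⟨h1, _⟩ | ⟨h1, _⟩
    · -- det3 x y z = 2A
      have hdet : det3 x y z = 2 * A := by linarith
      rcases exists_edge hconv hA hleast hx hy hz hdet with hE | hE
      · exact ⟨(x, y, z), hE, hx, hy, hz, hTxyz, hdet⟩
      · refine ⟨(y, z, x), hE, hy, hz, hx, ?_, ?_⟩
        · rw [hTxyz]; ext t; simp only [Finset.mem_insert, Finset.mem_singleton]; tauto
        · rw [← det3_cyclic]; exact hdet
    · -- det3 x y z = -(2A), use (x, z, y)
      have hdet : det3 x z y = 2 * A := by rw [det3_swap x y z]; linarith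
      have hTxzy : T = {x, z, y} := by
        rw [hTxyz]; ext t; simp only [Finset.mem_insert, Finset.mem_singleton]; tauto
      rcases exists_edge hconv hA hleast hx hz hy hdet with hE | hE
      · exact ⟨(x, z, y), hE, hx, hz, hy, hTxzy, hdet⟩
      · refine ⟨(z, y, x), hE, hz, hy, hx, ?_, ?_⟩
        · rw [hTxyz]; ext t; simp only [Finset.mem_insert, Finset.mem_singleton]; tauto
        · rw [← det3_cyclic]; exact hdet
  set F : Finset Plane → Plane × Plane × Plane := fun T =>
    if h : ∃ p : Plane × Plane × Plane, R T p then h.choose else (0, 0, 0) with hF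
  have hFspec : ∀ T ∈ 𝒯, R T (F T) := by
    intro T hT
    have h := hrep T hT
    simp only [hF, dif_pos h]
    exact h.choose_spec
  set f : Finset Plane → Plane × Plane := fun T => ((F T).1, (F T).2.1) with hf
  -- each pair is the edge of at most 2 triangles in 𝒯
  have hfiber : ∀ p ∈ 𝒯.image f, (𝒯.filter (fun T => f T = p)).card ≤ 2 := by
    intro p hp
    obtain ⟨T0, hT0, hT0p⟩ := Finset.mem_image.1 hp
    have hR0 := hFspec T0 hT0
    have hp1 : p.1 ∈ S := by rw [← hT0p]; exact hR0.2.1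
    have hp12 : p.1 ≠ p.2 := by
      intro hpe
      have hd := hR0.2.2.2.2.2
      have h1 : (F T0).1 = p.1 := by rw [← hT0p]
      have h2 : (F T0).2.1 = p.2 := by rw [← hT0p]
      rw [h1, h2, ← hpe] at hd
      have : det3 p.1 p.1 ((F T0).2.2) = 0 := by simp only [det3]; ring
      rw [this] at hd; linarith
    calc (𝒯.filter (fun T => f T = p)).card
        ≤ (S.filter (fun w => det3 p.1 p.2 w = 2 * A)).card := by
          apply Finset.card_le_card_of_injOn (fun T => (F T).2.2)
          · intro T hT
            rw [Finset.mem_coe, Finset.mem_filter] at hT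
            obtain ⟨hT𝒯, hTp⟩ := hT
            have hRT := hFspec T hT𝒯
            have h1 : (F T).1 = p.1 := by rw [← hTp]
            have h2 : (F T).2.1 = p.2 := by rw [← hTp]
            rw [Finset.mem_coe, Finset.mem_filter]
            refine ⟨hRT.2.2.2.1, ?_⟩
            have := hRT.2.2.2.2.2
            rw [h1, h2] at this
            exact this
          · intro T hT T' hT'
            simp only [Finset.coe_filter, Set.mem_setOf_eq] at hT hT'
            obtain ⟨hT𝒯, hTp⟩ := hT
            obtain ⟨hT'𝒯, hT'p⟩ := hT'
            intro hww
            have e1 := (hFspec T hT𝒯).2.2.2.2.1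
            have e2 := (hFspec T' hT'𝒯).2.2.2.2.1
            have h1 : (F T).1 = p.1 := by rw [← hTp]
            have h2 : (F T).2.1 = p.2 := by rw [← hTp]
            have h1' : (F T').1 = p.1 := by rw [← hT'p]
            have h2' : (F T').2.1 = p.2 := by rw [← hT'p]
            rw [h1, h2] at e1
            rw [h1', h2'] at e2
            have hww' : (F T).2.2 = (F T').2.2 := hww
            rw [e1, e2, hww']
      _ ≤ 2 := third_vertex_card hconv hA hp12
  have hmain : 𝒯.card ≤ 2 * (𝒯.image f).card :=
    Finset.card_le_mul_card_image 𝒯 2 hfiber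
  -- the image injects into S via the first coordinate
  have himg : (𝒯.image f).card ≤ S.card := by
    apply Finset.card_le_card_of_injOn Prod.fst
    · intro p hp
      obtain ⟨T0, hT0, hT0p⟩ := Finset.mem_image.1 hp
      rw [← hT0p]
      exact (hFspec T0 hT0).2.1
    · intro p hp q hq hpq
      simp only [Finset.coe_image, Set.mem_image] at hp hq
      obtain ⟨T, hT, hTp⟩ := hp
      obtain ⟨T', hT', hT'q⟩ := hq
      have hRT := hFspec T (by exact_mod_cast hT)
      have hRT' := hFspec T' (by exact_mod_cast hT')
      -- p = f T, q = f T'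
      have hedge1 : IsEdge S p.1 p.2 := by rw [← hTp]; exact hRT.1
      have hedge2 : IsEdge S q.1 q.2 := by rw [← hT'q]; exact hRT'.1
      have hmem1 : p.2 ∈ S := by rw [← hTp]; exact hRT.2.2.1
      have hmem2 : q.2 ∈ S := by rw [← hT'q]; exact hRT'.2.2.1
      have hne1 : p.1 ≠ p.2 := by
        intro hpe
        have hd := hRT.2.2.2.2.2
        have h1 : (F T).1 = p.1 := by rw [← hTp]
        have h2 : (F T).2.1 = p.2 := by rw [← hTp]
        rw [h1, h2, ← hpe] at hd
        have : det3 p.1 p.1 ((F T).2.2) = 0 := by simp only [det3]; ring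
        rw [this] at hd; linarith
      have hne2 : q.1 ≠ q.2 := by
        intro hpe
        have hd := hRT'.2.2.2.2.2
        have h1 : (F T').1 = q.1 := by rw [← hT'q]
        have h2 : (F T').2.1 = q.2 := by rw [← hT'q]
        rw [h1, h2, ← hpe] at hd
        have : det3 q.1 q.1 ((F T').2.2) = 0 := by simp only [det3]; ring
        rw [this] at hd; linarith
      have hsnd : p.2 = q.2 := by
        rw [hpq] at hedge1 hne1
        exact edge_unique hedge1 hedge2 hmem1 hmem2 hne1 hne2
      exact Prod.ext hpq hsnd
  have hfinal : areaTripleCount2 S A ≤ 2 * n := by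
    rw [hcount, ← hcard]
    calc 𝒯.card ≤ 2 * (𝒯.image f).card := hmain
      _ ≤ 2 * S.card := by omega
  calc (areaTripleCount2 S A : ℝ) ≤ ((2 * n : ℕ) : ℝ) := by exact_mod_cast hfinal
    _ = 2 * n := by push_cast; ring
end
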